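/- arXiv:1906.04094 — 5 statements merged into one kernel-verified Lean document; each statement's English description precedes it below -/
import Mathlib

section
/- Let S1 and S2 be sequences of length 2n over {1,...,n} in which each element appears exactly twice, and suppose S2 is obtained from S1 by swapping the entries at positions i and i+1, where the entries a and b at these positions are distinct. Then the interval graphs represented by S1 and S2 are equal if and only if the two swapped entries are both first occurrences (left endpoints) or both second occurrences (right endpoints). -/
/-- A string representation: a sequence of length `2 * n` over `Fin n` in which
each element appears exactly twice. -/
def IsStringRep {n : ℕ} (S : Fin (2 * n) → Fin n) : Prop :=
  ∀ x : Fin n, (Finset.univ.filter (fun i => S i = x)).card = 2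

/-- Position of the first occurrence of `x` in `S`. -/
noncomputable def firstOcc {n : ℕ} (S : Fin (2 * n) → Fin n) (x : Fin n) : ℕ :=
  sInf {i : ℕ | ∃ h : i < 2 * n, S ⟨i, h⟩ = x}

/-- Position of the second (last) occurrence of `x` in `S`. -/
noncomputable def secondOcc {n : ℕ} (S : Fin (2 * n) → Fin n) (x : Fin n) : ℕ :=
  sSup {i : ℕ | ∃ h : i < 2 * n, S ⟨i, h⟩ = x}

/-- The interval graph encoded by a string representation: vertex `x`
corresponds to the interval `[firstOcc S x, secondOcc S x]` and adjacency is
interval intersection. -/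
noncomputable def stringGraph {n : ℕ} (S : Fin (2 * n) → Fin n) : SimpleGraph (Fin n) :=
  SimpleGraph.fromRel fun i j =>
    firstOcc S i ≤ secondOcc S j ∧ firstOcc S j ≤ secondOcc S i

lemma rep_pair {n : ℕ} {S : Fin (2*n) → Fin n} (hS : IsStringRep S) (x : Fin n) :
    ∃ p q : Fin (2*n), (p:ℕ) < (q:ℕ) ∧ ∀ j, S j = x ↔ j = p ∨ j = q := by
  have h := hS x
  rw [Finset.card_eq_two] at h
  obtain ⟨p, q, hpq, hset⟩ := h
  have key : ∀ j, S j = x ↔ j = p ∨ j = q := by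
    intro j
    constructor
    · intro hj
      have hmem : j ∈ Finset.univ.filter (fun i => S i = x) := by simp [hj]
      rw [hset] at hmem; simpa using hmem
    · rintro (rfl | rfl)
      · have hmem : j ∈ Finset.filter (fun i => S i = x) Finset.univ := by
          rw [hset]; exact Finset.mem_insert_self _ _
        simpa using hmem
      · have hmem : j ∈ Finset.filter (fun i => S i = x) Finset.univ := by
          rw [hset]; exact Finset.mem_insert_of_mem (Finset.mem_singleton_self _)
        simpa using hmem
  have hv : (p:ℕ) ≠ (q:ℕ) := fun h => hpq (Fin.val_injective h)
  rcases lt_or_gt_of_ne hv with h | h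
  · exact ⟨p, q, h, key⟩
  · exact ⟨q, p, h, fun j => (key j).trans or_comm⟩

lemma occSet_eq {n : ℕ} {S : Fin (2*n) → Fin n} {x : Fin n} {p q : Fin (2*n)}
    (h : ∀ j, S j = x ↔ j = p ∨ j = q) :
    {i : ℕ | ∃ h : i < 2*n, S ⟨i,h⟩ = x} = {(p:ℕ), (q:ℕ)} := by
  ext m
  simp only [Set.mem_setOf_eq, Set.mem_insert_iff, Set.mem_singleton_iff]
  constructor
  · rintro ⟨hm, hSm⟩
    rcases (h _).1 hSm with h' | h'
    · exact Or.inl (congrArg Fin.val h')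
    · exact Or.inr (congrArg Fin.val h')
  · rintro (rfl | rfl)
    · exact ⟨p.isLt, (h p).2 (Or.inl rfl)⟩
    · exact ⟨q.isLt, (h q).2 (Or.inr rfl)⟩

lemma firstOcc_of {n : ℕ} {S : Fin (2*n) → Fin n} {x : Fin n} {p q : Fin (2*n)}
    (h : ∀ j, S j = x ↔ j = p ∨ j = q) :
    firstOcc S x = min (p:ℕ) (q:ℕ) := by
  rw [firstOcc, occSet_eq h, csInf_pair]

lemma secondOcc_of {n : ℕ} {S : Fin (2*n) → Fin n} {x : Fin n} {p q : Fin (2*n)}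
    (h : ∀ j, S j = x ↔ j = p ∨ j = q) :
    secondOcc S x = max (p:ℕ) (q:ℕ) := by
  rw [secondOcc, occSet_eq h, csSup_pair]

lemma stringGraph_adj {n : ℕ} (S : Fin (2*n) → Fin n) (x y : Fin n) :
    (stringGraph S).Adj x y ↔
      x ≠ y ∧ (firstOcc S x ≤ secondOcc S y ∧ firstOcc S y ≤ secondOcc S x) := by
  simp only [stringGraph, SimpleGraph.fromRel_adj]
  tauto

theorem stmt1 {n : ℕ} (S1 : Fin (2 * n) → Fin n) (hS1 : IsStringRep S1)
    (i : Fin (2 * n)) (hi : (i : ℕ) + 1 < 2 * n)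
    (a b : Fin n) (ha : S1 i = a) (hb : S1 ⟨(i : ℕ) + 1, hi⟩ = b) (hab : a ≠ b)
    (S2 : Fin (2 * n) → Fin n)
    (hS2 : S2 = S1 ∘ Equiv.swap i ⟨(i : ℕ) + 1, hi⟩) :
    stringGraph S2 = stringGraph S1 ↔
      ((firstOcc S1 a = (i : ℕ) ∧ firstOcc S1 b = (i : ℕ) + 1) ∨
       (secondOcc S1 a = (i : ℕ) ∧ secondOcc S1 b = (i : ℕ) + 1)) := by
  subst hS2
  set jj : Fin (2 * n) := ⟨(i : ℕ) + 1, hi⟩ with hjjdef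
  have hjjval : (jj : ℕ) = (i : ℕ) + 1 := rfl
  -- the other occurrence of a
  obtain ⟨oa, hAo, hoa1, hoa2⟩ :
      ∃ oa : Fin (2*n), (∀ j, S1 j = a ↔ j = i ∨ j = oa) ∧ (oa:ℕ) ≠ (i:ℕ) ∧ (oa:ℕ) ≠ (i:ℕ)+1 := by
    obtain ⟨p, q, hlt, hA⟩ := rep_pair hS1 a
    have hne2 : ∀ o : Fin (2*n), S1 o = a → (o:ℕ) ≠ (i:ℕ)+1 := by
      intro o hSo h
      have ho : o = jj := Fin.ext h
      rw [ho, hb] at hSo; exact hab hSo.symm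
    rcases (hA i).1 ha with h | h
    · refine ⟨q, fun j => by rw [hA, ← h], ?_, hne2 q ((hA q).2 (Or.inr rfl))⟩
      have := congrArg Fin.val h; omega
    · refine ⟨p, fun j => by rw [hA, ← h]; exact or_comm, ?_, hne2 p ((hA p).2 (Or.inl rfl))⟩
      have := congrArg Fin.val h; omega
  -- the other occurrence of b
  obtain ⟨ob, hBo, hob1, hob2⟩ :
      ∃ ob : Fin (2*n), (∀ j, S1 j = b ↔ j = jj ∨ j = ob) ∧ (ob:ℕ) ≠ (i:ℕ) ∧ (ob:ℕ) ≠ (i:ℕ)+1 := by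
    obtain ⟨p, q, hlt, hB⟩ := rep_pair hS1 b
    have hne2 : ∀ o : Fin (2*n), S1 o = b → (o:ℕ) ≠ (i:ℕ) := by
      intro o hSo h
      have ho : o = i := Fin.ext h
      rw [ho, ha] at hSo; exact hab hSo
    rcases (hB jj).1 hb with h | h
    · refine ⟨q, fun j => by rw [hB, ← h], hne2 q ((hB q).2 (Or.inr rfl)), ?_⟩
      have := congrArg Fin.val h; rw [hjjval] at this; omega
    · refine ⟨p, fun j => by rw [hB, ← h]; exact or_comm, hne2 p ((hB p).2 (Or.inl rfl)), ?_⟩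
      have := congrArg Fin.val h; rw [hjjval] at this; omega
  have hoai : oa ≠ i := fun h => hoa1 (congrArg Fin.val h)
  have hoaj : oa ≠ jj := fun h => hoa2 (congrArg Fin.val h)
  have hobi : ob ≠ i := fun h => hob1 (congrArg Fin.val h)
  have hobj : ob ≠ jj := fun h => hob2 (congrArg Fin.val h)
  have hswap_oa : Equiv.swap i jj oa = oa := Equiv.swap_apply_of_ne_of_ne hoai hoaj
  have hswap_ob : Equiv.swap i jj ob = ob := Equiv.swap_apply_of_ne_of_ne hobi hobj
  have hA2 : ∀ j, (S1 ∘ Equiv.swap i jj) j = a ↔ j = jj ∨ j = oa := by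
    intro j
    rw [Function.comp_apply, hAo, Equiv.swap_apply_eq_iff, Equiv.swap_apply_eq_iff,
      Equiv.swap_apply_left, hswap_oa]
  have hB2 : ∀ j, (S1 ∘ Equiv.swap i jj) j = b ↔ j = i ∨ j = ob := by
    intro j
    rw [Function.comp_apply, hBo, Equiv.swap_apply_eq_iff, Equiv.swap_apply_eq_iff,
      Equiv.swap_apply_right, hswap_ob]
  have fa1 : firstOcc S1 a = min (i:ℕ) (oa:ℕ) := firstOcc_of hAo
  have sa1 : secondOcc S1 a = max (i:ℕ) (oa:ℕ) := secondOcc_of hAo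
  have fb1 : firstOcc S1 b = min ((i:ℕ)+1) (ob:ℕ) := firstOcc_of hBo
  have sb1 : secondOcc S1 b = max ((i:ℕ)+1) (ob:ℕ) := secondOcc_of hBo
  have fa2 : firstOcc (S1 ∘ Equiv.swap i jj) a = min ((i:ℕ)+1) (oa:ℕ) := firstOcc_of hA2
  have sa2 : secondOcc (S1 ∘ Equiv.swap i jj) a = max ((i:ℕ)+1) (oa:ℕ) := secondOcc_of hA2
  have fb2 : firstOcc (S1 ∘ Equiv.swap i jj) b = min (i:ℕ) (ob:ℕ) := firstOcc_of hB2
  have sb2 : secondOcc (S1 ∘ Equiv.swap i jj) b = max (i:ℕ) (ob:ℕ) := secondOcc_of hB2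
  have hocc_other : ∀ z, z ≠ a → z ≠ b →
      firstOcc (S1 ∘ Equiv.swap i jj) z = firstOcc S1 z ∧
        secondOcc (S1 ∘ Equiv.swap i jj) z = secondOcc S1 z := by
    intro z hza hzb
    have hj : ∀ j, (S1 ∘ Equiv.swap i jj) j = z ↔ S1 j = z := by
      intro j
      rcases eq_or_ne j i with rfl | hji
      · rw [Function.comp_apply, Equiv.swap_apply_left, hb, ha]
        exact iff_of_false (fun h => hzb h.symm) (fun h => hza h.symm)
      rcases eq_or_ne j jj with rfl | hjj'
      · rw [Function.comp_apply, Equiv.swap_apply_right, ha, hb]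
        exact iff_of_false (fun h => hza h.symm) (fun h => hzb h.symm)
      · rw [Function.comp_apply, Equiv.swap_apply_of_ne_of_ne hji hjj']
    have hset : {m : ℕ | ∃ h : m < 2*n, (S1 ∘ Equiv.swap i jj) ⟨m,h⟩ = z}
        = {m : ℕ | ∃ h : m < 2*n, S1 ⟨m,h⟩ = z} := by
      ext m
      simp only [Set.mem_setOf_eq]
      exact exists_congr fun h => hj _
    exact ⟨congrArg sInf hset, congrArg sSup hset⟩
  have hother_ne : ∀ z, z ≠ a → z ≠ b →
      firstOcc S1 z ≠ (i:ℕ) ∧ firstOcc S1 z ≠ (i:ℕ)+1 ∧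
        secondOcc S1 z ≠ (i:ℕ) ∧ secondOcc S1 z ≠ (i:ℕ)+1 := by
    intro z hza hzb
    obtain ⟨p, q, hlt, hZ⟩ := rep_pair hS1 z
    have hp := (hZ p).2 (Or.inl rfl)
    have hq := (hZ q).2 (Or.inr rfl)
    have hpi : (p:ℕ) ≠ (i:ℕ) := by
      intro h; have : p = i := Fin.ext h; rw [this, ha] at hp; exact hza hp.symm
    have hqi : (q:ℕ) ≠ (i:ℕ) := by
      intro h; have : q = i := Fin.ext h; rw [this, ha] at hq; exact hza hq.symm
    have hpj : (p:ℕ) ≠ (i:ℕ)+1 := by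
      intro h; have : p = jj := Fin.ext h; rw [this, hb] at hp; exact hzb hp.symm
    have hqj : (q:ℕ) ≠ (i:ℕ)+1 := by
      intro h; have : q = jj := Fin.ext h; rw [this, hb] at hq; exact hzb hq.symm
    rw [firstOcc_of hZ, secondOcc_of hZ]
    omega
  rcases lt_or_gt_of_ne hoa1 with hoaC | hoaC <;> rcases lt_or_gt_of_ne hob1 with hobC | hobC
  · -- oa < i, ob < i : both second occurrences
    refine iff_of_true ?_ (Or.inr ⟨by rw [sa1]; omega, by rw [sb1]; omega⟩)
    have hf : ∀ z, firstOcc (S1 ∘ Equiv.swap i jj) z = firstOcc S1 z := by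
      intro z
      rcases eq_or_ne z a with rfl | hza
      · rw [fa2, fa1]; omega
      rcases eq_or_ne z b with rfl | hzb
      · rw [fb2, fb1]; omega
      · exact (hocc_other z hza hzb).1
    have hfne : ∀ z, firstOcc S1 z ≠ (i:ℕ)+1 := by
      intro z
      rcases eq_or_ne z a with rfl | hza
      · rw [fa1]; omega
      rcases eq_or_ne z b with rfl | hzb
      · rw [fb1]; omega
      · exact (hother_ne z hza hzb).2.1
    have hkey : ∀ y z, (firstOcc (S1 ∘ Equiv.swap i jj) y ≤ secondOcc (S1 ∘ Equiv.swap i jj) z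
        ↔ firstOcc S1 y ≤ secondOcc S1 z) := by
      intro y z
      rw [hf y]
      have := hfne y
      rcases eq_or_ne z a with rfl | hza
      · rw [sa2, sa1]; omega
      rcases eq_or_ne z b with rfl | hzb
      · rw [sb2, sb1]; omega
      · rw [(hocc_other z hza hzb).2]
    ext x y
    rw [stringGraph_adj, stringGraph_adj, hkey x y, hkey y x]
  · -- oa < i, ob > i : i is second occ of a, i+1 is first occ of b
    refine iff_of_false ?_ ?_
    · intro heq
      have h1 : (stringGraph (S1 ∘ Equiv.swap i jj)).Adj a b := by
        rw [stringGraph_adj]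
        refine ⟨hab, ?_, ?_⟩
        · rw [fa2, sb2]; omega
        · rw [fb2, sa2]; omega
      have h2 : ¬ (stringGraph S1).Adj a b := by
        rw [stringGraph_adj]
        rintro ⟨-, -, h⟩
        rw [fb1, sa1] at h; omega
      rw [heq] at h1; exact h2 h1
    · rintro (⟨h1, h2⟩ | ⟨h1, h2⟩)
      · rw [fa1] at h1; omega
      · rw [sb1] at h2; omega
  · -- oa > i, ob < i : i is first occ of a, i+1 is second occ of b
    refine iff_of_false ?_ ?_
    · intro heq
      have h1 : (stringGraph S1).Adj a b := by
        rw [stringGraph_adj]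
        refine ⟨hab, ?_, ?_⟩
        · rw [fa1, sb1]; omega
        · rw [fb1, sa1]; omega
      have h2 : ¬ (stringGraph (S1 ∘ Equiv.swap i jj)).Adj a b := by
        rw [stringGraph_adj]
        rintro ⟨-, h, -⟩
        rw [fa2, sb2] at h; omega
      rw [heq] at h2; exact h2 h1
    · rintro (⟨h1, h2⟩ | ⟨h1, h2⟩)
      · rw [fb1] at h2; omega
      · rw [sa1] at h1; omega
  · -- oa > i, ob > i : both first occurrences
    refine iff_of_true ?_ (Or.inl ⟨by rw [fa1]; omega, by rw [fb1]; omega⟩)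
    have hs : ∀ z, secondOcc (S1 ∘ Equiv.swap i jj) z = secondOcc S1 z := by
      intro z
      rcases eq_or_ne z a with rfl | hza
      · rw [sa2, sa1]; omega
      rcases eq_or_ne z b with rfl | hzb
      · rw [sb2, sb1]; omega
      · exact (hocc_other z hza hzb).2
    have hsne : ∀ z, secondOcc S1 z ≠ (i:ℕ) := by
      intro z
      rcases eq_or_ne z a with rfl | hza
      · rw [sa1]; omega
      rcases eq_or_ne z b with rfl | hzb
      · rw [sb1]; omega
      · exact (hother_ne z hza hzb).2.2.1
    have hkey : ∀ y z, (firstOcc (S1 ∘ Equiv.swap i jj) y ≤ secondOcc (S1 ∘ Equiv.swap i jj) z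
        ↔ firstOcc S1 y ≤ secondOcc S1 z) := by
      intro y z
      rw [hs z]
      have := hsne z
      rcases eq_or_ne y a with rfl | hya
      · rw [fa2, fa1]; omega
      rcases eq_or_ne y b with rfl | hyb
      · rw [fb2, fb1]; omega
      · rw [(hocc_other y hya hyb).1]
    ext x y
    rw [stringGraph_adj, stringGraph_adj, hkey x y, hkey y x]
end

section
/- Let S be a string representation of length 2n. Swapping two adjacent entries of S, where the left one is the second (right) endpoint of a and the right one is the first (left) endpoint of b, a ≠ b, yields a string representation of the graph G + (a,b), i.e., exactly the edge (a,b) is added and no other adjacency changes. -/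
/-- The set of (natural number) positions where `x` occurs in `S`. -/
def occSet {n : ℕ} (S : Fin (2 * n) → Fin n) (x : Fin n) : Set ℕ :=
  {i : ℕ | ∃ h : i < 2 * n, S ⟨i, h⟩ = x}

lemma firstOcc_eq {n : ℕ} (S : Fin (2 * n) → Fin n) (x : Fin n) :
    firstOcc S x = sInf (occSet S x) := rfl

lemma secondOcc_eq {n : ℕ} (S : Fin (2 * n) → Fin n) (x : Fin n) :
    secondOcc S x = sSup (occSet S x) := rfl

lemma occ_bdd {n : ℕ} (S : Fin (2 * n) → Fin n) (x : Fin n) : BddAbove (occSet S x) :=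
  ⟨2 * n, fun _ hj => hj.1.le⟩

lemma occ_nonempty {n : ℕ} (S : Fin (2 * n) → Fin n) (hS : IsStringRep S) (x : Fin n) :
    (occSet S x).Nonempty := by
  have h := hS x
  have hne : (Finset.univ.filter (fun i => S i = x)).Nonempty := by
    rw [← Finset.card_pos, h]; norm_num
  obtain ⟨j, hj⟩ := hne
  exact ⟨j.1, j.2, by simpa using (Finset.mem_filter.mp hj).2⟩

lemma first_mem {n : ℕ} (S : Fin (2 * n) → Fin n) (hS : IsStringRep S) (x : Fin n) :
    firstOcc S x ∈ occSet S x :=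
  Nat.sInf_mem (occ_nonempty S hS x)

lemma second_mem {n : ℕ} (S : Fin (2 * n) → Fin n) (hS : IsStringRep S) (x : Fin n) :
    secondOcc S x ∈ occSet S x :=
  Nat.sSup_mem (occ_nonempty S hS x) (occ_bdd S x)

lemma first_lt_second {n : ℕ} (S : Fin (2 * n) → Fin n) (hS : IsStringRep S) (x : Fin n) :
    firstOcc S x < secondOcc S x := by
  have h := hS x
  have h2 : 1 < (Finset.univ.filter (fun i => S i = x)).card := by omega
  obtain ⟨j, hj, k, hk, hjk⟩ := Finset.one_lt_card.mp h2
  have hjx : S j = x := (Finset.mem_filter.mp hj).2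
  have hkx : S k = x := (Finset.mem_filter.mp hk).2
  have hj1 : firstOcc S x ≤ (j : ℕ) := Nat.sInf_le ⟨j.2, by simpa using hjx⟩
  have hk1 : firstOcc S x ≤ (k : ℕ) := Nat.sInf_le ⟨k.2, by simpa using hkx⟩
  have hj2 : (j : ℕ) ≤ secondOcc S x := le_csSup (occ_bdd S x) ⟨j.2, by simpa using hjx⟩
  have hk2 : (k : ℕ) ≤ secondOcc S x := le_csSup (occ_bdd S x) ⟨k.2, by simpa using hkx⟩
  have : (j : ℕ) ≠ (k : ℕ) := fun hc => hjk (Fin.ext hc)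
  omega

theorem stmt2 {n : ℕ} (S : Fin (2 * n) → Fin n) (hS : IsStringRep S)
    (i : Fin (2 * n)) (hi : (i : ℕ) + 1 < 2 * n)
    (a b : Fin n) (ha : S i = a) (hb : S ⟨(i : ℕ) + 1, hi⟩ = b) (hab : a ≠ b)
    (hra : secondOcc S a = (i : ℕ)) (hlb : firstOcc S b = (i : ℕ) + 1) :
    IsStringRep (S ∘ Equiv.swap i ⟨(i : ℕ) + 1, hi⟩) ∧
    stringGraph (S ∘ Equiv.swap i ⟨(i : ℕ) + 1, hi⟩) =
      stringGraph S ⊔ SimpleGraph.fromEdgeSet {s(a, b)} := by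
  set i1 : Fin (2 * n) := ⟨(i : ℕ) + 1, hi⟩ with hi1
  set e : Equiv.Perm (Fin (2 * n)) := Equiv.swap i i1 with he
  set T : Fin (2 * n) → Fin n := S ∘ e with hT
  have hii1 : i ≠ i1 := by
    intro hc
    have := congrArg Fin.val hc
    simp [hi1] at this
  -- basic values of T
  have hT_i : T i = b := by
    simp only [hT, he, Function.comp_apply, Equiv.swap_apply_left]
    exact hb
  have hT_i1 : T i1 = a := by
    simp only [hT, he, Function.comp_apply, Equiv.swap_apply_right]
    exact ha
  have hT_other : ∀ j : Fin (2 * n), j ≠ i → j ≠ i1 → T j = S j := by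
    intro j h1 h2
    simp only [hT, he, Function.comp_apply, Equiv.swap_apply_of_ne_of_ne h1 h2]
  -- numeric facts
  have hfa : firstOcc S a < (i : ℕ) := by
    have := first_lt_second S hS a; omega
  have hsb : (i : ℕ) + 1 < secondOcc S b := by
    have := first_lt_second S hS b; omega
  have hsne : ∀ y : Fin n, y ≠ a → secondOcc S y ≠ (i : ℕ) := by
    intro y hy hc
    obtain ⟨h2, hS2⟩ := second_mem S hS y
    apply hy
    have heq : (⟨secondOcc S y, h2⟩ : Fin (2 * n)) = i := Fin.ext hc
    rw [← hS2, heq, ha]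
  have hfne : ∀ y : Fin n, y ≠ b → firstOcc S y ≠ (i : ℕ) + 1 := by
    intro y hy hc
    obtain ⟨h2, hS2⟩ := first_mem S hS y
    apply hy
    have heq : (⟨firstOcc S y, h2⟩ : Fin (2 * n)) = i1 := Fin.ext hc
    rw [← hS2, heq]
    exact hb
  -- occurrence sets for x ∉ {a, b} are unchanged
  have hocc : ∀ x : Fin n, x ≠ a → x ≠ b → occSet T x = occSet S x := by
    intro x hxa hxb
    ext j
    constructor
    · rintro ⟨h, hj⟩
      refine ⟨h, ?_⟩
      by_cases h1 : (⟨j, h⟩ : Fin (2 * n)) = i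
      · rw [h1, hT_i] at hj; exact absurd hj.symm hxb
      by_cases h2 : (⟨j, h⟩ : Fin (2 * n)) = i1
      · rw [h2, hT_i1] at hj; exact absurd hj.symm hxa
      · rw [← hT_other _ h1 h2]; exact hj
    · rintro ⟨h, hj⟩
      refine ⟨h, ?_⟩
      by_cases h1 : (⟨j, h⟩ : Fin (2 * n)) = i
      · rw [h1, ha] at hj; exact absurd hj.symm hxa
      by_cases h2 : (⟨j, h⟩ : Fin (2 * n)) = i1
      · rw [h2] at hj
        rw [hb] at hj
        exact absurd hj.symm hxb
      · rw [hT_other _ h1 h2]; exact hj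
  have hfT_other : ∀ x : Fin n, x ≠ a → x ≠ b → firstOcc T x = firstOcc S x := by
    intro x h1 h2
    rw [firstOcc_eq, firstOcc_eq, hocc x h1 h2]
  have hsT_other : ∀ x : Fin n, x ≠ a → x ≠ b → secondOcc T x = secondOcc S x := by
    intro x h1 h2
    rw [secondOcc_eq, secondOcc_eq, hocc x h1 h2]
  -- endpoints of a and b in T
  have hmem_i1a : ((i : ℕ) + 1) ∈ occSet T a := ⟨hi, hT_i1⟩
  have hmem_ib : (i : ℕ) ∈ occSet T b := ⟨i.2, by
    have : (⟨(i : ℕ), i.2⟩ : Fin (2 * n)) = i := Fin.ext rfl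
    rw [this]; exact hT_i⟩
  have hfTa : firstOcc T a = firstOcc S a := by
    obtain ⟨hfa2, hfaS⟩ := first_mem S hS a
    have hne1 : (⟨firstOcc S a, hfa2⟩ : Fin (2 * n)) ≠ i := by
      intro hc; have := congrArg Fin.val hc; simp at this; omega
    have hne2 : (⟨firstOcc S a, hfa2⟩ : Fin (2 * n)) ≠ i1 := by
      intro hc; have := congrArg Fin.val hc; simp [hi1] at this; omega
    apply le_antisymm
    · exact Nat.sInf_le ⟨hfa2, by rw [hT_other _ hne1 hne2]; exact hfaS⟩
    · rw [firstOcc_eq T]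
      apply le_csInf ⟨_, hmem_i1a⟩
      rintro j ⟨h, hj⟩
      by_cases h1 : (⟨j, h⟩ : Fin (2 * n)) = i
      · rw [h1, hT_i] at hj; exact absurd hj hab.symm
      by_cases h2 : (⟨j, h⟩ : Fin (2 * n)) = i1
      · have := congrArg Fin.val h2; simp [hi1] at this; omega
      · rw [hT_other _ h1 h2] at hj
        exact Nat.sInf_le ⟨h, hj⟩
  have hsTa : secondOcc T a = (i : ℕ) + 1 := by
    apply le_antisymm
    · rw [secondOcc_eq T]
      apply csSup_le ⟨_, hmem_i1a⟩
      rintro j ⟨h, hj⟩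
      by_cases h1 : (⟨j, h⟩ : Fin (2 * n)) = i
      · rw [h1, hT_i] at hj; exact absurd hj hab.symm
      by_cases h2 : (⟨j, h⟩ : Fin (2 * n)) = i1
      · have := congrArg Fin.val h2; simp [hi1] at this; omega
      · rw [hT_other _ h1 h2] at hj
        have hjm : j ∈ occSet S a := ⟨h, hj⟩
        have := le_csSup (occ_bdd S a) hjm
        rw [← secondOcc_eq] at this
        omega
    · exact le_csSup (occ_bdd T a) hmem_i1a
  have hfTb : firstOcc T b = (i : ℕ) := by
    apply le_antisymm
    · exact Nat.sInf_le hmem_ib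
    · rw [firstOcc_eq T]
      apply le_csInf ⟨_, hmem_ib⟩
      rintro j ⟨h, hj⟩
      by_cases h1 : (⟨j, h⟩ : Fin (2 * n)) = i
      · have := congrArg Fin.val h1; simp at this; omega
      by_cases h2 : (⟨j, h⟩ : Fin (2 * n)) = i1
      · rw [h2, hT_i1] at hj; exact absurd hj hab
      · rw [hT_other _ h1 h2] at hj
        have hjm : j ∈ occSet S b := ⟨h, hj⟩
        have := Nat.sInf_le hjm
        rw [← firstOcc_eq] at this
        omega
  have hsTb : secondOcc T b = secondOcc S b := by
    obtain ⟨hsb2, hsbS⟩ := second_mem S hS b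
    have hne1 : (⟨secondOcc S b, hsb2⟩ : Fin (2 * n)) ≠ i := by
      intro hc; have := congrArg Fin.val hc; simp at this; omega
    have hne2 : (⟨secondOcc S b, hsb2⟩ : Fin (2 * n)) ≠ i1 := by
      intro hc; have := congrArg Fin.val hc; simp [hi1] at this; omega
    apply le_antisymm
    · rw [secondOcc_eq T]
      apply csSup_le ⟨_, hmem_ib⟩
      rintro j ⟨h, hj⟩
      by_cases h1 : (⟨j, h⟩ : Fin (2 * n)) = i
      · have := congrArg Fin.val h1; simp at this; omega
      by_cases h2 : (⟨j, h⟩ : Fin (2 * n)) = i1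
      · rw [h2, hT_i1] at hj; exact absurd hj hab
      · rw [hT_other _ h1 h2] at hj
        have hjm : j ∈ occSet S b := ⟨h, hj⟩
        have := le_csSup (occ_bdd S b) hjm
        rw [← secondOcc_eq] at this
        exact this
    · exact le_csSup (occ_bdd T b) ⟨hsb2, by rw [hT_other _ hne1 hne2]; exact hsbS⟩
  constructor
  · -- T is a string representation
    intro x
    refine Eq.trans ?_ (hS x)
    apply Finset.card_equiv e
    intro j
    simp [hT]
  · -- graph equality
    ext x y
    simp only [stringGraph, SimpleGraph.fromRel_adj, SimpleGraph.sup_adj,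
      SimpleGraph.fromEdgeSet_adj, Set.mem_singleton_iff, Sym2.eq_iff]
    by_cases hxy : x = y
    · simp [hxy]
    simp only [ne_eq, hxy, not_false_iff, true_and, and_true]
    by_cases hxa : x = a
    · subst hxa
      by_cases hyb : y = b
      · subst hyb
        rw [hfTa, hsTa, hfTb, hsTb]
        constructor
        · intro _; right; left; exact ⟨rfl, rfl⟩
        · intro _; left; exact ⟨by omega, by omega⟩
      · have hya : y ≠ x := fun hc => hxy hc.symm
        have h1 := hfT_other y hya hyb
        have h2 := hsT_other y hya hyb
        have h3 := hfne y hyb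
        rw [hfTa, hsTa, h1, h2]
        simp only [hyb, hab, and_false, false_and, or_false, or_self, false_or]
        omega
    by_cases hxb : x = b
    · subst hxb
      by_cases hya : y = a
      · subst hya
        rw [hfTa, hsTa, hfTb, hsTb]
        constructor
        · intro _; right; right; exact ⟨rfl, rfl⟩
        · intro _; left; exact ⟨by omega, by omega⟩
      · have hyb : y ≠ x := fun hc => hxy hc.symm
        have h1 := hfT_other y hya hyb
        have h2 := hsT_other y hya hyb
        have h3 := hsne y hya
        rw [hfTb, hsTb, h1, h2]
        simp only [hya, hab, Ne.symm hab, and_false, false_and, or_false, or_self, false_or]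
        omega
    · have h1 := hfT_other x hxa hxb
      have h2 := hsT_other x hxa hxb
      by_cases hya : y = a
      · subst hya
        have h3 := hfne x hxb
        rw [hfTa, hsTa, h1, h2]
        simp only [hxa, hxb, and_false, false_and, or_false, or_self, false_or]
        omega
      by_cases hyb : y = b
      · subst hyb
        have h3 := hsne x hxa
        rw [hfTb, hsTb, h1, h2]
        simp only [hxa, hxb, and_false, false_and, or_false, or_self, false_or]
        omega
      · have h3 := hfT_other y hya hyb
        have h4 := hsT_other y hya hyb
        rw [h1, h2, h3, h4]
        simp only [hxa, hxb, hya, hyb, and_false, false_and, or_false, or_self, false_or]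
end

section
/- If G is an interval graph on n vertices that is not a complete graph, then there exists a non-edge e of G such that G + e is also an interval graph. -/
/-- A simple graph is an interval graph if its vertices can be assigned closed
real intervals such that two distinct vertices are adjacent iff their
intervals intersect. -/
def IsIntervalGraph {V : Type*} (G : SimpleGraph V) : Prop :=
  ∃ l r : V → ℝ, (∀ v, l v ≤ r v) ∧
    ∀ u v : V, u ≠ v →
      (G.Adj u v ↔ (Set.Icc (l u) (r u) ∩ Set.Icc (l v) (r v)).Nonempty)

theorem stmt6 {V : Type*} [Fintype V] (G : SimpleGraph V)
    (hG : IsIntervalGraph G) (hnc : G ≠ ⊤) :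
    ∃ x y : V, x ≠ y ∧ ¬ G.Adj x y ∧
      IsIntervalGraph (G ⊔ SimpleGraph.fromEdgeSet {s(x, y)}) := by
  classical
  obtain ⟨l, r, hlr, hadj⟩ := hG
  have iccne : ∀ a b c d : ℝ, a ≤ b → c ≤ d →
      ((Set.Icc a b ∩ Set.Icc c d).Nonempty ↔ (a ≤ d ∧ c ≤ b)) := by
    intro a b c d hab hcd
    constructor
    · rintro ⟨t, ⟨ht1, ht2⟩, ht3, ht4⟩
      exact ⟨ht1.trans ht4, ht3.trans ht2⟩
    · rintro ⟨h1, h2⟩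
      exact ⟨max a c, ⟨le_max_left _ _, max_le hab h2⟩,
        ⟨le_max_right _ _, max_le h1 hcd⟩⟩
  have key : ∀ u v : V, u ≠ v → ¬ G.Adj u v → r u < l v ∨ r v < l u := by
    intro u v huv h
    by_contra hc
    push_neg at hc
    exact h ((hadj u v huv).2 ((iccne _ _ _ _ (hlr u) (hlr v)).2 ⟨hc.2, hc.1⟩))
  have hne : ∃ u v : V, u ≠ v ∧ ¬ G.Adj u v := by
    by_contra h
    push_neg at h
    exact hnc (by
      ext u v
      simp only [SimpleGraph.top_adj]
      exact ⟨fun h' => h'.ne, fun h' => h u v h'⟩)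
  obtain ⟨u0, v0, hu0v0, hnadj0⟩ := hne
  set T : Finset (V × V) :=
    Finset.univ.filter (fun p => ¬ G.Adj p.1 p.2 ∧ r p.1 < l p.2) with hT
  have hTne : T.Nonempty := by
    rcases key u0 v0 hu0v0 hnadj0 with h | h
    · exact ⟨(u0, v0), by simp [hT, hnadj0, h]⟩
    · exact ⟨(v0, u0), by
        simp only [hT, Finset.mem_filter, Finset.mem_univ, true_and]
        exact ⟨fun a => hnadj0 a.symm, h⟩⟩
  obtain ⟨p, hpT, hmin⟩ := T.exists_min_image (fun p => l p.2 - r p.1) hTne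
  obtain ⟨x, y⟩ := p
  simp only [hT, Finset.mem_filter, Finset.mem_univ, true_and] at hpT
  obtain ⟨hnadj, hrl⟩ := hpT
  have hmin' : ∀ u v : V, ¬ G.Adj u v → r u < l v → l y - r x ≤ l v - r u := by
    intro u v h1 h2
    have := hmin (u, v) (by simp [hT, h1, h2])
    simpa using this
  have hxy : x ≠ y := by
    rintro rfl
    exact absurd (hlr x) (not_le.2 hrl)
  set m : ℝ := (r x + l y) / 2 with hm
  have hm1 : r x < m := by rw [hm]; linarith
  have hm2 : m < l y := by rw [hm]; linarith
  set l' : V → ℝ := Function.update l y m with hl'def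
  set r' : V → ℝ := Function.update r x m with hr'def
  have hl'y : l' y = m := Function.update_self _ _ _
  have hr'x : r' x = m := Function.update_self _ _ _
  have hl'ne : ∀ v, v ≠ y → l' v = l v := fun v hv => Function.update_of_ne hv _ _
  have hr'ne : ∀ v, v ≠ x → r' v = r v := fun v hv => Function.update_of_ne hv _ _
  have hlr' : ∀ v, l' v ≤ r' v := by
    intro v
    by_cases hvy : v = y
    · rw [hvy, hl'y, hr'ne _ (Ne.symm hxy)]
      linarith [hlr y]
    · rw [hl'ne v hvy]
      by_cases hvx : v = x
      · rw [hvx, hr'x]; linarith [hlr x]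
      · rw [hr'ne v hvx]; exact hlr v
  have hlmono : ∀ v, l' v ≤ l v := by
    intro v
    by_cases hvy : v = y
    · subst hvy; rw [hl'y]; linarith
    · rw [hl'ne v hvy]
  have hrmono : ∀ v, r v ≤ r' v := by
    intro v
    by_cases hvx : v = x
    · subst hvx; rw [hr'x]; linarith
    · rw [hr'ne v hvx]
  -- main contradiction lemma
  have main : ∀ u v : V, u ≠ v → ¬ G.Adj u v → r u < l v →
      ¬ (u = x ∧ v = y) → ¬ (l' v ≤ r' u) := by
    intro u v huv hA hlt hnp hle
    by_cases hux : u = x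
    · subst hux
      have hvy : v ≠ y := fun h => hnp ⟨rfl, h⟩
      rw [hl'ne v hvy, hr'x] at hle
      have := hmin' _ _ hA hlt
      linarith
    · rw [hr'ne u hux] at hle
      by_cases hvy : v = y
      · subst hvy
        rw [hl'y] at hle
        have := hmin' _ _ hA hlt
        linarith
      · rw [hl'ne v hvy] at hle
        linarith
  refine ⟨x, y, hxy, hnadj, l', r', hlr', ?_⟩
  intro u v huv
  rw [iccne _ _ _ _ (hlr' u) (hlr' v)]
  have hadj' : (G ⊔ SimpleGraph.fromEdgeSet {s(x, y)}).Adj u v ↔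
      G.Adj u v ∨ (u = x ∧ v = y) ∨ (u = y ∧ v = x) := by
    simp [SimpleGraph.fromEdgeSet_adj, Sym2.eq_iff, huv]
  rw [hadj']
  constructor
  · rintro (hA | ⟨hu, hv⟩ | ⟨hu, hv⟩)
    · obtain ⟨h1, h2⟩ := (iccne _ _ _ _ (hlr u) (hlr v)).1 ((hadj u v huv).1 hA)
      exact ⟨le_trans (hlmono u) (le_trans h1 (hrmono v)),
             le_trans (hlmono v) (le_trans h2 (hrmono u))⟩
    · rw [hu, hv]
      refine ⟨?_, ?_⟩
      · rw [hl'ne _ hxy, hr'ne _ (Ne.symm hxy)]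
        linarith [hlr x, hlr y, hm1, hm2]
      · rw [hl'y, hr'x]
    · rw [hu, hv]
      refine ⟨?_, ?_⟩
      · rw [hl'y, hr'x]
      · rw [hl'ne _ hxy, hr'ne _ (Ne.symm hxy)]
        linarith [hlr x, hlr y, hm1, hm2]
  · rintro ⟨h1, h2⟩
    by_contra hcon
    push_neg at hcon
    obtain ⟨hA, hne1, hne2⟩ := hcon
    rcases key u v huv hA with hlt | hlt
    · exact main u v huv hA hlt (fun h => hne1 h.1 h.2) h2
    · exact main v u huv.symm (fun a => hA a.symm) hlt
        (fun h => hne2 h.2 h.1) h1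
end

section
/- If a graph G contains an asteroidal triple, then G is not an interval graph. -/
/-- An asteroidal triple: three pairwise non-adjacent vertices such that
between every two of them there is a path avoiding the closed neighborhood of
the third. -/
def IsAsteroidalTriple {V : Type*} (G : SimpleGraph V) (a b c : V) : Prop :=
  a ≠ b ∧ a ≠ c ∧ b ≠ c ∧ ¬ G.Adj a b ∧ ¬ G.Adj a c ∧ ¬ G.Adj b c ∧
  (∃ p : G.Walk a b, ∀ v ∈ p.support, v ≠ c ∧ ¬ G.Adj c v) ∧
  (∃ p : G.Walk a c, ∀ v ∈ p.support, v ≠ b ∧ ¬ G.Adj b v) ∧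
  (∃ p : G.Walk b c, ∀ v ∈ p.support, v ≠ a ∧ ¬ G.Adj a v)

/-- Along a walk, if a predicate holds at the start and fails at the end,
some edge of the walk crosses from `P` to `¬P`. -/
lemma walk_cross {V : Type*} {G : SimpleGraph V} (P : V → Prop)
    {x y : V} (p : G.Walk x y) (hx : P x) (hy : ¬ P y) :
    ∃ u v, G.Adj u v ∧ u ∈ p.support ∧ v ∈ p.support ∧ P u ∧ ¬ P v := by
  induction p with
  | nil => exact absurd hx hy
  | cons h q ih =>
    rename_i s t w
    by_cases ht : P t
    · obtain ⟨u, v, huv, hu, hv, hPu, hPv⟩ := ih ht hy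
      exact ⟨u, v, huv, by simp [hu], by simp [hv], hPu, hPv⟩
    · exact ⟨s, t, h, by simp, by simp, hx, ht⟩

/-- Key lemma: `m` is a vertex whose interval lies strictly between the
intervals of `x` and `y`, and there is a walk from `x` to `y` avoiding the
closed neighborhood of `m`. Contradiction. -/
lemma key {V : Type*} {G : SimpleGraph V} (l r : V → ℝ) (hlr : ∀ v, l v ≤ r v)
    (hadj : ∀ u v : V, u ≠ v →
      (G.Adj u v ↔ (Set.Icc (l u) (r u) ∩ Set.Icc (l v) (r v)).Nonempty))
    (m x y : V) (p : G.Walk x y) (hp : ∀ v ∈ p.support, v ≠ m ∧ ¬ G.Adj m v)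
    (hx : r x < l m) (hy : r m < l y) : False := by
  -- every vertex on the walk has interval disjoint from that of m
  have side : ∀ v ∈ p.support, r v < l m ∨ r m < l v := by
    intro v hv
    obtain ⟨hne, hnadj⟩ := hp v hv
    by_contra hcon
    push_neg at hcon
    obtain ⟨h1, h2⟩ := hcon
    have : (Set.Icc (l m) (r m) ∩ Set.Icc (l v) (r v)).Nonempty := by
      refine ⟨max (l m) (l v), ?_, ?_⟩
      · exact ⟨le_max_left _ _, max_le (hlr m) h2⟩
      · exact ⟨le_max_right _ _, max_le h1 (hlr v)⟩
    exact hnadj (((hadj m v) (Ne.symm hne)).2 this)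
  have hyP : ¬ r y < l m := by
    have := hlr y; have := hlr m; linarith
  obtain ⟨u, v, huv, hu, hv, hPu, hPv⟩ := walk_cross (fun v => r v < l m) p hx hyP
  have hv' : r m < l v := (side v hv).resolve_left hPv
  have hint := ((hadj u v) huv.ne).1 huv
  obtain ⟨z, ⟨_, hz1⟩, ⟨hz2, _⟩⟩ := hint
  have := hlr m
  linarith

theorem stmt11 {V : Type*} (G : SimpleGraph V) (a b c : V)
    (h : IsAsteroidalTriple G a b c) : ¬ IsIntervalGraph G := by
  rintro ⟨l, r, hlr, hadj⟩
  obtain ⟨hab, hac, hbc, nab, nac, nbc, ⟨pab, hpab⟩, ⟨pac, hpac⟩, ⟨pbc, hpbc⟩⟩ := h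
  -- pairwise disjointness of the three intervals
  have disj : ∀ u v : V, u ≠ v → ¬ G.Adj u v → r u < l v ∨ r v < l u := by
    intro u v hne hn
    by_contra hcon
    push_neg at hcon
    obtain ⟨h1, h2⟩ := hcon
    exact hn (((hadj u v) hne).2
      ⟨max (l u) (l v), ⟨le_max_left _ _, max_le (hlr u) h1⟩,
        ⟨le_max_right _ _, max_le h2 (hlr v)⟩⟩)
  have dab := disj a b hab nab
  have dac := disj a c hac nac
  have dbc := disj b c hbc nbc
  have hpab' : ∀ v ∈ pab.reverse.support, v ≠ c ∧ ¬ G.Adj c v := by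
    intro v hv; exact hpab v (by simpa using hv)
  have hpac' : ∀ v ∈ pac.reverse.support, v ≠ b ∧ ¬ G.Adj b v := by
    intro v hv; exact hpac v (by simpa using hv)
  have hpbc' : ∀ v ∈ pbc.reverse.support, v ≠ a ∧ ¬ G.Adj a v := by
    intro v hv; exact hpbc v (by simpa using hv)
  have la := hlr a; have lb := hlr b; have lc := hlr c
  rcases dab with h1 | h1 <;> rcases dac with h2 | h2 <;> rcases dbc with h3 | h3
  · -- a < b < c : b in middle, walk a c
    exact key l r hlr hadj b a c pac hpac h1 h3
  · -- a < b, a < c, c < b : a < c < b, c middle, walk a b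
    exact key l r hlr hadj c a b pab hpab h2 h3
  · -- a < b, c < a, b < c : cycle, impossible
    linarith
  · -- a < b, c < a, c < b : c < a < b, a middle, walk c b = reverse of pbc
    exact key l r hlr hadj a c b pbc.reverse hpbc' h2 h1
  · -- b < a, a < c : b < a < c, a middle, walk b c
    exact key l r hlr hadj a b c pbc hpbc h1 h2
  · -- same middle a
    exact key l r hlr hadj a b c pbc hpbc h1 h2
  · -- b < a, c < a, b < c : b < c < a, c middle, walk b a = reverse of pab
    exact key l r hlr hadj c b a pab.reverse hpab' h3 h2
  · -- b < a, c < a, c < b : c < b < a, b middle, walk c a = reverse of pac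
    exact key l r hlr hadj b c a pac.reverse hpac' h3 h1
end

section
/- Let G be an interval graph that is not complete, given with an interval representation in which all 2n endpoints are distinct. Let j+1 be a vertex of minimal right endpoint among vertices that are not universal, and let y be the vertex whose left endpoint is the smallest among left endpoints lying strictly to the right of the right endpoint of j+1; then y exists, (j+1, y) is a non-edge of G, and G + (j+1, y) is an interval graph. -/
theorem stmt15 {V : Type*} [Fintype V] (G : SimpleGraph V)
    (l r : V → ℝ) (hlr : ∀ v, l v ≤ r v)
    (hrep : ∀ u v : V, u ≠ v →
      (G.Adj u v ↔ (Set.Icc (l u) (r u) ∩ Set.Icc (l v) (r v)).Nonempty))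
    (hdist : Function.Injective (Sum.elim l r))
    (hnc : G ≠ ⊤)
    (u : V) (hu : ¬ ∀ w, w ≠ u → G.Adj u w)
    (humin : ∀ w : V, (¬ ∀ w', w' ≠ w → G.Adj w w') → r u ≤ r w) :
    ∃ y : V, r u < l y ∧ (∀ z : V, r u < l z → l y ≤ l z) ∧
      ¬ G.Adj u y ∧
      IsIntervalGraph (G ⊔ SimpleGraph.fromEdgeSet {s(u, y)}) := by
  classical
  have hlinj : Function.Injective l := fun a b h => by
    have := hdist (show Sum.elim l r (Sum.inl a) = Sum.elim l r (Sum.inl b) from h)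
    simpa using this
  have hlt : ∀ v, l v < r v := fun v => by
    rcases lt_or_eq_of_le (hlr v) with h | h
    · exact h
    · exact absurd (hdist (show Sum.elim l r (Sum.inl v) = Sum.elim l r (Sum.inr v) from h))
        (by simp)
  have hAdj : ∀ a b : V, a ≠ b → (G.Adj a b ↔ l b ≤ r a ∧ l a ≤ r b) := by
    intro a b hab
    rw [hrep a b hab, Set.Icc_inter_Icc, Set.nonempty_Icc, max_le_iff, le_min_iff, le_min_iff]
    constructor
    · rintro ⟨⟨_, h1⟩, ⟨h2, _⟩⟩; exact ⟨h2, h1⟩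
    · rintro ⟨h1, h2⟩; exact ⟨⟨hlr a, h2⟩, ⟨h1, hlr b⟩⟩
  push_neg at hu
  obtain ⟨w0, hw0ne, hw0⟩ := hu
  have hw0' : r u < l w0 := by
    rw [hAdj u w0 (Ne.symm hw0ne)] at hw0
    push_neg at hw0
    by_cases h : l w0 ≤ r u
    · exfalso
      have h2 : r w0 < l u := hw0 h
      have hnu : ¬ ∀ w', w' ≠ w0 → G.Adj w0 w' := by
        intro hall
        have := hall u (Ne.symm hw0ne)
        rw [hAdj w0 u hw0ne] at this
        linarith [this.2]
      have := humin w0 hnu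
      linarith [hlr u]
    · exact lt_of_not_ge h
  -- pick y with minimal left endpoint among those beyond r u
  set s : Finset V := Finset.univ.filter (fun z => r u < l z) with hs
  have hsne : s.Nonempty := ⟨w0, by simp [hs, hw0']⟩
  obtain ⟨y, hys, hymin⟩ := s.exists_min_image l hsne
  have hyru : r u < l y := by simpa [hs] using hys
  have hymin' : ∀ z : V, r u < l z → l y ≤ l z := by
    intro z hz
    exact hymin z (by simp [hs, hz])
  have huy : u ≠ y := by
    intro h
    rw [← h] at hyru
    linarith [hlr u]
  have hnadj : ¬ G.Adj u y := by
    rw [hAdj u y huy]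
    rintro ⟨h1, _⟩
    linarith
  refine ⟨y, hyru, hymin', hnadj, ?_⟩
  -- construct c
  set t : Finset ℝ := (Finset.univ.filter (fun z : V => z ≠ y ∧ r u < l z)).image l with ht
  set T : Finset ℝ := insert (l y + 2) t with hT
  have hTne : T.Nonempty := ⟨l y + 2, Finset.mem_insert_self _ _⟩
  set m : ℝ := T.min' hTne with hm
  have hym : l y < m := by
    rw [hm, Finset.lt_min'_iff]
    intro b hb
    rw [hT, Finset.mem_insert] at hb
    rcases hb with hb | hb
    · linarith [hb]
    · rw [ht] at hb
      obtain ⟨z, hz, hzb⟩ := Finset.mem_image.mp hb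
      simp only [Finset.mem_filter] at hz
      subst hzb
      exact lt_of_le_of_ne (hymin' z hz.2.2) (fun h => hz.2.1 (hlinj h.symm))
  set c : ℝ := (l y + m) / 2 with hc
  have hyc : l y < c := by rw [hc]; linarith
  have hcm : c < m := by rw [hc]; linarith
  have hclz : ∀ z : V, z ≠ y → r u < l z → c < l z := by
    intro z hzy hz
    have : l z ∈ T := by
      rw [hT]
      exact Finset.mem_insert_of_mem (Finset.mem_image_of_mem l (by simp [hzy, hz]))
    exact lt_of_lt_of_le hcm (Finset.min'_le T _ this)
  set r' : V → ℝ := Function.update r u c with hr'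
  have hr'u : r' u = c := Function.update_self u c r
  have hr'o : ∀ v, v ≠ u → r' v = r v := fun v hv => Function.update_of_ne hv c r
  have hlr' : ∀ v, l v ≤ r' v := by
    intro v
    by_cases hv : v = u
    · rw [hv, hr'u]; linarith [hlr u]
    · rw [hr'o v hv]; exact hlr v
  refine ⟨l, r', hlr', ?_⟩
  intro a b hab
  have key : ∀ a b : V, a ≠ b →
      ((Set.Icc (l a) (r' a) ∩ Set.Icc (l b) (r' b)).Nonempty ↔ l b ≤ r' a ∧ l a ≤ r' b) := by
    intro a b hab
    rw [Set.Icc_inter_Icc, Set.nonempty_Icc, max_le_iff, le_min_iff, le_min_iff]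
    constructor
    · rintro ⟨⟨_, h1⟩, ⟨h2, _⟩⟩; exact ⟨h2, h1⟩
    · rintro ⟨h1, h2⟩; exact ⟨⟨hlr' a, h2⟩, ⟨h1, hlr' b⟩⟩
  rw [key a b hab]
  simp only [SimpleGraph.sup_adj, SimpleGraph.fromEdgeSet_adj, Set.mem_singleton_iff,
    Sym2.eq_iff]
  have main : ∀ b : V, b ≠ u → ((G.Adj u b ∨ b = y) ↔ l b ≤ c ∧ l u ≤ r b) := by
    intro b hbu
    constructor
    · rintro (h | hby)
      · rw [hAdj u b (Ne.symm hbu)] at h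
        refine ⟨by linarith [h.1], h.2⟩
      · exact ⟨by rw [hby]; exact le_of_lt hyc, by rw [hby]; linarith [hlr u, hlt y]⟩
    · rintro ⟨h1, h2⟩
      by_cases hby : b = y
      · exact Or.inr hby
      · left
        rw [hAdj u b (Ne.symm hbu)]
        refine ⟨?_, h2⟩
        by_contra h
        push_neg at h
        exact absurd h1 (not_le.mpr (hclz b hby h))
  by_cases hau : a = u
  · have hbu : b ≠ u := fun h => hab (hau.trans h.symm)
    rw [show r' a = c by rw [hau, hr'u], hr'o b hbu, show l a = l u by rw [hau]]
    constructor
    · rintro (h | ⟨(⟨h1, h2⟩ | ⟨h1, h2⟩), _⟩)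
      · exact (main b hbu).mp (Or.inl (by rw [← hau]; exact h))
      · exact (main b hbu).mp (Or.inr h2)
      · exact absurd h2 hbu
    · intro h
      rcases (main b hbu).mpr h with h' | h'
      · exact Or.inl (by rw [hau]; exact h')
      · exact Or.inr ⟨Or.inl ⟨hau, h'⟩, hab⟩
  · by_cases hbu : b = u
    · rw [hr'o a hau, show r' b = c by rw [hbu, hr'u], show l b = l u by rw [hbu]]
      constructor
      · rintro (h | ⟨(⟨h1, h2⟩ | ⟨h1, h2⟩), _⟩)
        · have := (main a hau).mp (Or.inl (by rw [← hbu]; exact h.symm))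
          exact ⟨this.2, this.1⟩
        · exact absurd h1 hau
        · have := (main a hau).mp (Or.inr h1)
          exact ⟨this.2, this.1⟩
      · intro h
        rcases (main a hau).mpr ⟨h.2, h.1⟩ with h' | h'
        · exact Or.inl (by rw [hbu]; exact h'.symm)
        · exact Or.inr ⟨Or.inr ⟨h', hbu⟩, hab⟩
    · rw [hr'o a hau, hr'o b hbu, ← hAdj a b hab]
      constructor
      · rintro (h | ⟨(⟨h1, _⟩ | ⟨_, h2⟩), _⟩)
        · exact h
        · exact absurd h1 hau
        · exact absurd h2 hbu
      · exact Or.inl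
end
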